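/- Subsampled Gaussian mechanism, reverse direction (upper bound): let σ > 0, q ∈ [0, 1], g, g' ∈ ℝ, and set d = g' − g. Let P be the Gaussian measure on ℝ with mean g and variance σ², and let M = (1 − q)·P + q·N(g', σ²) be the subsampled-Gaussian mixture. Then for every natural number λ ≥ 1, ∫_ℝ ((dP/dM)(w))^{λ} dP(w) ≤ Σ_{k=0}^{λ} C(λ, k) · q^k · (1 − q)^{λ−k} · exp((k² + k)·d² / (2σ²)); i.e. this moment of the reverse likelihood ratio is at most the expectation of exp((K² + K)·d² / (2σ²)) for K ~ Binomial(λ, q). -/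
import Mathlib


set_option autoImplicit false

open MeasureTheory ProbabilityTheory ENNReal

private lemma gauss_ratio_pow_mul (σ : ℝ) (hσ : 0 < σ) (g d : ℝ) (k : ℕ) (w : ℝ) :
    (gaussianPDFReal g (Real.toNNReal (σ ^ 2)) w /
        gaussianPDFReal (g + d) (Real.toNNReal (σ ^ 2)) w) ^ k *
      gaussianPDFReal g (Real.toNNReal (σ ^ 2)) w =
    Real.exp (((k : ℝ) ^ 2 + (k : ℝ)) * d ^ 2 / (2 * σ ^ 2)) *
      gaussianPDFReal (g - k * d) (Real.toNNReal (σ ^ 2)) w := by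
  have hv : ((Real.toNNReal (σ ^ 2)) : ℝ) = σ ^ 2 := Real.coe_toNNReal _ (sq_nonneg σ)
  have hs : (0 : ℝ) < Real.sqrt (2 * Real.pi * σ ^ 2) := Real.sqrt_pos.2 (by positivity)
  simp only [gaussianPDFReal, hv]
  rw [mul_div_mul_left _ _ (inv_ne_zero hs.ne'), ← Real.exp_sub, ← Real.exp_nat_mul,
    mul_left_comm, mul_left_comm (Real.exp _)]
  congr 1
  rw [← Real.exp_add, ← Real.exp_add]
  congr 1
  field_simp
  ring

theorem subsampled_gaussian_privacy_cost_right
    (σ : ℝ) (hσ : 0 < σ) (q : ℝ) (hq0 : 0 ≤ q) (hq1 : q ≤ 1)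
    (g g' : ℝ) (l : ℕ) (hl : 1 ≤ l)
    (P : Measure ℝ) (hP : P = gaussianReal g (Real.toNNReal (σ ^ 2)))
    (M : Measure ℝ)
    (hM : M = (ENNReal.ofReal (1 - q)) • P +
      (ENNReal.ofReal q) • gaussianReal g' (Real.toNNReal (σ ^ 2)))
    (d : ℝ) (hd : d = g' - g) :
    ∫⁻ w, (P.rnDeriv M w) ^ (l : ℝ) ∂P ≤
      ENNReal.ofReal (∑ k ∈ Finset.range (l + 1),
        (l.choose k : ℝ) * q ^ k * (1 - q) ^ (l - k) *
          Real.exp (((k : ℝ) ^ 2 + (k : ℝ)) * d ^ 2 / (2 * σ ^ 2))) := by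
  have hg' : g' = g + d := by rw [hd]; ring
  set v : NNReal := Real.toNNReal (σ ^ 2) with hvdef
  have hv : v ≠ 0 := by
    simp only [hvdef, ne_eq, Real.toNNReal_eq_zero, not_le]
    positivity
  set p : ℝ → ℝ := gaussianPDFReal g v with hpdef
  set p' : ℝ → ℝ := gaussianPDFReal g' v with hp'def
  set m : ℝ → ℝ := fun w => (1 - q) * p w + q * p' w with hmdef
  have hp : ∀ w, 0 < p w := fun w => gaussianPDFReal_pos _ _ _ hv
  have hp' : ∀ w, 0 < p' w := fun w => gaussianPDFReal_pos _ _ _ hv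
  have hmpos : ∀ w, 0 < m w := by
    intro w
    rcases eq_or_lt_of_le hq1 with h | h
    · simp only [hmdef, h]
      simpa using hp' w
    · have h1 : 0 < (1 - q) * p w := mul_pos (by linarith) (hp w)
      have h2 : 0 ≤ q * p' w := mul_nonneg hq0 (hp' w).le
      simp only [hmdef]; linarith
  have hpm : Measurable p := measurable_gaussianPDFReal g v
  have hp'm : Measurable p' := measurable_gaussianPDFReal g' v
  have hmm : Measurable m := (hpm.const_mul _).add (hp'm.const_mul _)
  -- M as a density w.r.t. volume
  have hMw : M = volume.withDensity (fun w => ENNReal.ofReal (m w)) := by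
    rw [hM, hP, gaussianReal_of_var_ne_zero _ hv, gaussianReal_of_var_ne_zero _ hv,
      ← withDensity_smul _ (measurable_gaussianPDF g v),
      ← withDensity_smul _ (measurable_gaussianPDF g' v),
      ← withDensity_add_left ((measurable_gaussianPDF g v).const_smul _)]
    congr 1
    funext w
    simp only [Pi.add_apply, Pi.smul_apply, smul_eq_mul, gaussianPDF, hmdef]
    rw [← ENNReal.ofReal_mul (by linarith), ← ENNReal.ofReal_mul hq0,
      ← ENNReal.ofReal_add (mul_nonneg (by linarith) (hp w).le)
        (mul_nonneg hq0 (hp' w).le)]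
  -- P as a density w.r.t. M
  have hfmeas : Measurable fun w => ENNReal.ofReal (p w / m w) :=
    (hpm.div hmm).ennreal_ofReal
  have hPw : P = M.withDensity (fun w => ENNReal.ofReal (p w / m w)) := by
    rw [hMw, ← withDensity_mul _ hmm.ennreal_ofReal hfmeas, hP,
      gaussianReal_of_var_ne_zero _ hv]
    congr 1
    funext w
    simp only [Pi.mul_apply, gaussianPDF]
    rw [← ENNReal.ofReal_mul (hmpos w).le, mul_div_cancel₀ _ (hmpos w).ne']
  have hac : P ≪ M := hPw ▸ withDensity_absolutelyContinuous M _
  have hsf : SigmaFinite M := by rw [hMw]; infer_instance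
  have hRN : P.rnDeriv M =ᵐ[P] fun w => ENNReal.ofReal (p w / m w) := by
    have h := Measure.rnDeriv_withDensity M hfmeas
    rw [← hPw] at h
    exact h.filter_mono hac.ae_le
  -- the bounding real function
  set F : ℝ → ℝ := fun w => ∑ k ∈ Finset.range (l + 1),
    ((l.choose k : ℝ) * q ^ k * (1 - q) ^ (l - k) *
      Real.exp (((k : ℝ) ^ 2 + (k : ℝ)) * d ^ 2 / (2 * σ ^ 2))) *
      gaussianPDFReal (g - k * d) v w with hFdef
  have hcoef : ∀ k : ℕ, 0 ≤ (l.choose k : ℝ) * q ^ k * (1 - q) ^ (l - k) *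
      Real.exp (((k : ℝ) ^ 2 + (k : ℝ)) * d ^ 2 / (2 * σ ^ 2)) := by
    intro k
    have h1 : (0:ℝ) ≤ (1 - q) ^ (l - k) := pow_nonneg (by linarith) _
    positivity
  -- pointwise bound
  have hptwise : ∀ w, (p w / m w) ^ l * p w ≤ F w := by
    intro w
    have h1 : p w / m w ≤ (1 - q) + q * (p w / p' w) := by
      have key : p w / m w ≤ ((1 - q) * p' w + q * p w) / p' w := by
        rw [div_le_div_iff₀ (hmpos w) (hp' w)]
        show p w * p' w ≤ ((1 - q) * p' w + q * p w) * ((1 - q) * p w + q * p' w)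
        nlinarith [mul_nonneg (mul_nonneg hq0 (by linarith : (0:ℝ) ≤ 1 - q))
          (sq_nonneg (p w - p' w)), (hp w), (hp' w)]
      have heq : ((1 - q) * p' w + q * p w) / p' w = (1 - q) + q * (p w / p' w) := by
        rw [add_div, mul_div_assoc q, mul_div_assoc (1 - q), div_self (hp' w).ne', mul_one]
      rwa [heq] at key
    have h2 : (p w / m w) ^ l * p w ≤ ((1 - q) + q * (p w / p' w)) ^ l * p w :=
      mul_le_mul_of_nonneg_right
        (pow_le_pow_left₀ (div_nonneg (hp w).le (hmpos w).le) h1 l) (hp w).le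
    refine h2.trans_eq ?_
    rw [add_comm, add_pow, Finset.sum_mul]
    refine Finset.sum_congr rfl fun k hk => ?_
    have hid := gauss_ratio_pow_mul σ hσ g d k w
    rw [← hg'] at hid
    rw [mul_pow]
    simp only [hpdef, hp'def] at hid ⊢
    linear_combination (q ^ k * (1 - q) ^ (l - k) * (l.choose k : ℝ)) * hid
  -- rewrite the integral
  have hmeas2 : Measurable fun w => (ENNReal.ofReal (p w / m w)) ^ l :=
    hfmeas.pow_const l
  calc ∫⁻ w, (P.rnDeriv M w) ^ (l : ℝ) ∂P
      = ∫⁻ w, (ENNReal.ofReal (p w / m w)) ^ l ∂P := by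
        refine lintegral_congr_ae (hRN.mono fun w hw => ?_)
        simp only [hw, ENNReal.rpow_natCast]
    _ = ∫⁻ w, ENNReal.ofReal ((p w / m w) ^ l * p w) := by
        rw [hP, gaussianReal_of_var_ne_zero _ hv,
          lintegral_withDensity_eq_lintegral_mul _ (measurable_gaussianPDF g v) hmeas2]
        refine lintegral_congr fun w => ?_
        simp only [Pi.mul_apply, gaussianPDF]
        rw [← ENNReal.ofReal_pow (div_nonneg (hp w).le (hmpos w).le), mul_comm,
          ← ENNReal.ofReal_mul (pow_nonneg (div_nonneg (hp w).le (hmpos w).le) l)]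
    _ ≤ ∫⁻ w, ENNReal.ofReal (F w) := by
        exact lintegral_mono fun w => ENNReal.ofReal_le_ofReal (hptwise w)
    _ = ENNReal.ofReal (∫ w, F w) := by
        refine (MeasureTheory.ofReal_integral_eq_lintegral_ofReal ?_ ?_).symm
        · exact integrable_finset_sum _ fun k _ =>
            (integrable_gaussianPDFReal _ _).const_mul _
        · refine Filter.Eventually.of_forall fun w => Finset.sum_nonneg fun k _ =>
            mul_nonneg (hcoef k) (gaussianPDFReal_nonneg _ _ _)
    _ = ENNReal.ofReal (∑ k ∈ Finset.range (l + 1),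
        (l.choose k : ℝ) * q ^ k * (1 - q) ^ (l - k) *
          Real.exp (((k : ℝ) ^ 2 + (k : ℝ)) * d ^ 2 / (2 * σ ^ 2))) := by
        congr 1
        rw [integral_finset_sum _ fun k _ => (integrable_gaussianPDFReal _ _).const_mul _]
        refine Finset.sum_congr rfl fun k _ => ?_
        rw [integral_const_mul, integral_gaussianPDFReal_eq_one _ hv, mul_one]
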